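/- Let A be a commutative unital C*-algebra, let n ≥ 1, let ε with 0 < ε < 1/(5n), and let a₁,…,aₙ ∈ A satisfy max_j ‖aⱼ − aⱼ*‖ < ε and ‖∑ⱼ aⱼ² − 1‖ < ε. Set bⱼ = (aⱼ + aⱼ*)/2 and b = ∑ⱼ bⱼ². Then b is self-adjoint, ‖1 − b‖ < 1, hence b is invertible, and the elements cⱼ = bⱼ·b^{-1/2} are self-adjoint and satisfy ∑ⱼ cⱼ² = 1. -/

import Mathlib

open Finset in
/-- In a commutative unital C*-algebra, if `0 < ε < 1/(5n)` and `a₁, …, aₙ` satisfy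
`‖aⱼ - aⱼ*‖ < ε` and `‖∑ aⱼ² - 1‖ < ε`, then with `bⱼ = (aⱼ + aⱼ*)/2` and `b = ∑ bⱼ²`,
`b` is self-adjoint with `‖1 - b‖ < 1`, hence invertible, and the elements
`cⱼ = bⱼ · b^{-1/2}` are self-adjoint with `∑ cⱼ² = 1`. -/
theorem exists_sphere_tuple_near
    {A : Type*} [CommCStarAlgebra A] [PartialOrder A] [StarOrderedRing A]
    (n : ℕ) (hn : 1 ≤ n) (ε : ℝ) (hε : 0 < ε) (hε' : ε < 1 / (5 * n))
    (a : Fin n → A)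
    (ha1 : ∀ j, ‖a j - star (a j)‖ < ε)
    (ha2 : ‖(∑ j, (a j) ^ 2) - 1‖ < ε)
    (b : Fin n → A) (hb : ∀ j, b j = (1 / 2 : ℂ) • (a j + star (a j)))
    (B : A) (hB : B = ∑ j, (b j) ^ 2)
    (c : Fin n → A) (hc : ∀ j, c j = b j * CFC.sqrt (Ring.inverse B)) :
    IsSelfAdjoint B ∧ ‖1 - B‖ < 1 ∧ IsUnit B ∧
      (∀ j, IsSelfAdjoint (c j)) ∧ ∑ j, (c j) ^ 2 = 1 := by
  have hn1 : (1:ℝ) ≤ n := by exact_mod_cast hn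
  have hnε : (n : ℝ) * ε < 1/5 := by
    have hn0 : (0:ℝ) < 5 * n := by positivity
    have := mul_lt_mul_of_pos_left hε' hn0
    rw [mul_one_div, div_self hn0.ne'] at this
    linarith
  have hε5 : ε < 1/5 := by nlinarith
  -- b j self-adjoint
  have hbsa : ∀ j, IsSelfAdjoint (b j) := by
    intro j
    rw [hb j, isSelfAdjoint_iff, star_smul, star_add, star_star]
    norm_num [add_comm]
  -- B self-adjoint
  have hBsa : IsSelfAdjoint B := by
    rw [isSelfAdjoint_iff, hB]
    rw [star_sum]
    exact Finset.sum_congr rfl fun j _ => ((hbsa j).pow 2).star_eq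
  -- each b j ^ 2 is nonneg
  have hbsq : ∀ j, (0:A) ≤ b j ^ 2 := by
    intro j
    rw [sq]
    nth_rewrite 1 [← (hbsa j).star_eq]
    exact star_mul_self_nonneg _
  have hBnn : (0:A) ≤ B := hB ▸ Finset.sum_nonneg fun j _ => hbsq j
  -- d j = b j - a j with norm < ε/2
  have hd : ∀ j, ‖b j - a j‖ < ε / 2 := by
    intro j
    have : b j - a j = (1/2 : ℂ) • (star (a j) - a j) := by
      rw [hb j, smul_add]
      have : ((1:ℂ)/2) • a j + ((1:ℂ)/2) • a j = a j := by
        rw [← add_smul]; norm_num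
      rw [smul_sub]
      linear_combination (norm := module) this
    rw [this, norm_smul, ← norm_neg (star (a j) - a j), neg_sub]
    have := ha1 j
    have h12 : ‖(1/2 : ℂ)‖ = 1/2 := by norm_num
    rw [h12]
    nlinarith [norm_nonneg (a j - star (a j))]
  set x := ‖1 - B‖ with hx
  have hx0 : 0 ≤ x := norm_nonneg _
  -- bound each ‖b j‖
  have hbj : ∀ j, ‖b j‖ ≤ 1 + x / 2 := by
    intro j
    have hle : b j ^ 2 ≤ B := hB ▸ Finset.single_le_sum (f := fun i => b i ^ 2)
      (fun i _ => hbsq i) (Finset.mem_univ j)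
    have h1 : ‖b j ^ 2‖ ≤ ‖B‖ := CStarAlgebra.norm_le_norm_of_nonneg_of_le (hbsq j) hle
    have h2 : ‖b j ^ 2‖ = ‖b j‖ ^ 2 := by
      rw [sq, sq]
      nth_rewrite 1 [← (hbsa j).star_eq]
      rw [CStarRing.norm_star_mul_self]
    have hone : ‖(1:A)‖ ≤ 1 := by
      have h := CStarRing.norm_star_mul_self (x := (1:A))
      rw [star_one, one_mul] at h
      nlinarith [norm_nonneg (1:A)]
    have h3 : ‖B‖ ≤ 1 + x := by
      calc ‖B‖ = ‖1 - (1 - B)‖ := by ring_nf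
        _ ≤ ‖(1:A)‖ + ‖1 - B‖ := norm_sub_le _ _
        _ ≤ 1 + x := by rw [hx]; linarith
    nlinarith [norm_nonneg (b j)]
  -- bound ‖a j ^ 2 - b j ^ 2‖
  have hab : ∀ j, ‖a j ^ 2 - b j ^ 2‖ ≤ ε ^ 2 / 4 + ε * (1 + x / 2) := by
    intro j
    have key : a j ^ 2 - b j ^ 2 = (b j - a j) * (b j - a j)
        - b j * (b j - a j) - (b j - a j) * b j := by ring
    calc ‖a j ^ 2 - b j ^ 2‖
        ≤ ‖(b j - a j) * (b j - a j) - b j * (b j - a j)‖ + ‖(b j - a j) * b j‖ := by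
          rw [key]; exact norm_sub_le _ _
      _ ≤ ‖(b j - a j) * (b j - a j)‖ + ‖b j * (b j - a j)‖ + ‖(b j - a j) * b j‖ := by
          have := norm_sub_le ((b j - a j) * (b j - a j)) (b j * (b j - a j))
          linarith
      _ ≤ ‖b j - a j‖ * ‖b j - a j‖ + ‖b j‖ * ‖b j - a j‖ + ‖b j - a j‖ * ‖b j‖ := by
          gcongr <;> exact norm_mul_le _ _
      _ ≤ ε ^ 2 / 4 + ε * (1 + x / 2) := by
          have h1 := hd j
          have h2 := hbj j
          have h3 := norm_nonneg (b j - a j)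
          have h4 := norm_nonneg (b j)
          nlinarith
  -- main norm estimate
  have hxlt : x < 1 := by
    have h1 : x ≤ ‖1 - ∑ j, a j ^ 2‖ + ‖(∑ j, a j ^ 2) - B‖ := by
      calc x = ‖(1 - ∑ j, a j ^ 2) + ((∑ j, a j ^ 2) - B)‖ := by ring_nf; exact hx
        _ ≤ _ := norm_add_le _ _
    have h2 : ‖1 - ∑ j, a j ^ 2‖ < ε := by rwa [norm_sub_rev] at ha2
    have h3 : ‖(∑ j, a j ^ 2) - B‖ ≤ n * (ε ^ 2 / 4 + ε * (1 + x / 2)) := by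
      rw [hB, ← Finset.sum_sub_distrib]
      calc ‖∑ j, (a j ^ 2 - b j ^ 2)‖ ≤ ∑ j : Fin n, ‖a j ^ 2 - b j ^ 2‖ :=
            norm_sum_le _ _
        _ ≤ ∑ _j : Fin n, (ε ^ 2 / 4 + ε * (1 + x / 2)) :=
            Finset.sum_le_sum fun j _ => hab j
        _ = n * (ε ^ 2 / 4 + ε * (1 + x / 2)) := by
            rw [Finset.sum_const, Finset.card_univ, Fintype.card_fin, nsmul_eq_mul]
    nlinarith [mul_pos (mul_pos hε hε) (lt_of_lt_of_le zero_lt_one hn1)]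
  -- B is a unit
  have hBunit : IsUnit B := by
    have := (Units.oneSub (1 - B) hxlt).isUnit
    simpa using this
  -- Ring.inverse B is nonneg
  have hinvnn : (0:A) ≤ Ring.inverse B := by
    obtain ⟨u, hu⟩ := hBunit
    rw [← hu, Ring.inverse_unit]
    exact CFC.inv_nonneg_of_nonneg u (by rwa [hu])
  have hsqrt_sa : IsSelfAdjoint (CFC.sqrt (Ring.inverse B)) :=
    IsSelfAdjoint.of_nonneg (CFC.sqrt_nonneg _)
  have hcsa : ∀ j, IsSelfAdjoint (c j) := by
    intro j
    rw [hc j, isSelfAdjoint_iff, star_mul, hsqrt_sa.star_eq, (hbsa j).star_eq, mul_comm]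
  refine ⟨hBsa, hxlt, hBunit, hcsa, ?_⟩
  have hsq : CFC.sqrt (Ring.inverse B) ^ 2 = Ring.inverse B := CFC.sq_sqrt _ hinvnn
  calc ∑ j, c j ^ 2 = ∑ j, b j ^ 2 * Ring.inverse B := by
        refine Finset.sum_congr rfl fun j _ => ?_
        rw [hc j, mul_pow, hsq]
    _ = B * Ring.inverse B := by rw [← Finset.sum_mul, ← hB]
    _ = 1 := Ring.mul_inverse_cancel B hBunit
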